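/- Let α > 0 be a real number and let x : ℤ → ℝ^n be a two-sided sequence that is uniformly bounded, i.e., there exists M ≥ 0 with ‖x[k]‖ ≤ M for all k ∈ ℤ. Then for every k ∈ ℤ the Grünwald–Letnikov fractional-order difference Δ^α x[k] := ∑_{j=0}^{∞} c_j^α · x[k−j] is well defined: the series ∑_{j=0}^{∞} c_j^α · x[k−j] converges absolutely in ℝ^n. -/
import Mathlib


/-- Generalized binomial coefficient `binom(α, j) = ∏_{i=0}^{j-1} (α - i)/(i + 1)`. -/
noncomputable def glBinom (α : ℝ) (j : ℕ) : ℝ :=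
  ∏ i ∈ Finset.range j, (α - i) / (i + 1)

/-- Grünwald–Letnikov coefficient `c_j^α = (-1)^j · binom(α, j)`. -/
noncomputable def glCoeff (α : ℝ) (j : ℕ) : ℝ :=
  (-1 : ℝ) ^ j * glBinom α j

lemma glBinom_abs_summable (α : ℝ) (hα : 0 < α) :
    Summable (fun j : ℕ => |glBinom α j|) := by
  set a : ℕ → ℝ := fun j => |glBinom α j| with ha
  set m := ⌈α⌉₊ with hm
  have hmα : α ≤ (m : ℝ) := Nat.le_ceil α
  set b : ℕ → ℝ := fun j => (j : ℝ) * a j with hb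
  have hann : ∀ j, 0 ≤ a j := fun j => abs_nonneg _
  have hbnn : ∀ j, 0 ≤ b j := fun j => mul_nonneg (Nat.cast_nonneg j) (abs_nonneg _)
  have hrec : ∀ j, m ≤ j → α * a j = b j - b (j + 1) := by
    intro j hj
    have hjα : α ≤ (j : ℝ) := hmα.trans (by exact_mod_cast hj)
    have h1 : glBinom α (j + 1) = glBinom α j * ((α - j) / (j + 1)) :=
      Finset.prod_range_succ _ j
    have h2 : a (j + 1) = a j * (((j : ℝ) - α) / (j + 1)) := by
      simp only [ha, h1, abs_mul, abs_div]
      congr 1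
      congr 1
      · rw [abs_sub_comm, abs_of_nonneg (by linarith)]
      · rw [abs_of_nonneg (by positivity)]
    have hj1 : ((j : ℝ) + 1) ≠ 0 := by positivity
    have h3 : ((j : ℝ) + 1) * a (j + 1) = a j * ((j : ℝ) - α) := by
      rw [h2]; field_simp
    simp only [hb]
    push_cast
    linear_combination h3
  have hsum : ∀ N : ℕ, ∑ i ∈ Finset.range (m + N), a i
      = ∑ i ∈ Finset.range m, a i + (b m - b (m + N)) / α := by
    intro N
    induction N with
    | zero => simp
    | succ N ih =>
      have h := hrec (m + N) (Nat.le_add_right m N)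
      have h' : a (m + N) = (b (m + N) - b (m + N + 1)) / α := by
        rw [eq_div_iff (ne_of_gt hα)]; linarith
      rw [← add_assoc, Finset.sum_range_succ, ih, h']
      ring
  have hC : ∀ N : ℕ, ∑ i ∈ Finset.range N, a i
      ≤ ∑ i ∈ Finset.range m, a i + b m / α := by
    intro N
    have h1 : ∑ i ∈ Finset.range N, a i ≤ ∑ i ∈ Finset.range (m + N), a i :=
      Finset.sum_le_sum_of_subset_of_nonneg
        (Finset.range_subset_range.2 (Nat.le_add_left N m)) (fun i _ _ => hann i)
    rw [hsum N] at h1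
    have h2 : (b m - b (m + N)) / α ≤ b m / α := by
      gcongr
      linarith [hbnn (m + N)]
    linarith
  exact summable_of_sum_range_le hann hC

/-- For `α > 0` and a uniformly bounded two-sided sequence `x : ℤ → ℝ^n`, the
Grünwald–Letnikov fractional-order difference
`Δ^α x[k] = ∑_{j=0}^{∞} c_j^α · x[k−j]` is well defined for every `k`:
the series converges absolutely in `ℝ^n`. -/
theorem glDifference_abs_convergent (n : ℕ) (α : ℝ) (hα : 0 < α)
    (x : ℤ → EuclideanSpace ℝ (Fin n))
    (M : ℝ) (hM : 0 ≤ M) (hbd : ∀ k : ℤ, ‖x k‖ ≤ M) :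
    ∀ k : ℤ, Summable (fun j : ℕ => ‖glCoeff α j • x (k - (j : ℤ))‖) := by
  intro k
  have hsum : Summable (fun j : ℕ => |glBinom α j| * M) :=
    (glBinom_abs_summable α hα).mul_right M
  apply Summable.of_nonneg_of_le (fun j => norm_nonneg _) ?_ hsum
  intro j
  rw [norm_smul]
  have h1 : ‖glCoeff α j‖ = |glBinom α j| := by
    simp [glCoeff, abs_mul, abs_pow]
  rw [h1]
  exact mul_le_mul_of_nonneg_left (hbd _) (abs_nonneg _)
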